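/- Let A be an associative unital ℝ-algebra containing families X, P : Fin D → A and M : Fin D → Fin D → A satisfying: ⁅P m, X n⁆ = η m n • 1, ⁅P m, P n⁆ = 0, ⁅X m, X n⁆ = 0, ⁅M m n, X k⁆ = 0, ⁅M m n, P k⁆ = 0, M m n = −M n m, and ⁅M m n, M k l⁆ = η n k • M m l + η m l • M n k − η n l • M m k − η m k • M n l. Define J m n := X m * P n − X n * P m + M m n. Then Σ_n ε n • Π n * Π n + (1/2) • J₍₂₎ * P² = Σ_n ε n • 𝒫 n * 𝒫 n + (1/2) • M₍₂₎ * P², where Π n := Σ_m ε m • P m * J m n, 𝒫 n := Σ_m ε m • P m * M m n, P² := Σ_m ε m • P m * P m, J₍₂₎ := Σ_{m,n} (ε m * ε n) • J m n * J n m, and M₍₂₎ := Σ_{m,n} (ε m * ε n) • M m n * M n m. (The orbital part of the angular momentum cancels in the fourth-order Casimir of iso(p,q).) -/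

import Mathlib

noncomputable section

def eps (p : ℕ) {D : ℕ} (m : Fin D) : ℝ := if (m : ℕ) < p then -1 else 1

def eta (p : ℕ) {D : ℕ} (m n : Fin D) : ℝ := if m = n then eps p m else 0

theorem stmt_5 (p q : ℕ) (A : Type*) [Ring A] [Algebra ℝ A]
    (X P : Fin (p + q) → A) (M : Fin (p + q) → Fin (p + q) → A)
    (hPX : ∀ m n, ⁅P m, X n⁆ = eta p m n • (1 : A))
    (hPP : ∀ m n, ⁅P m, P n⁆ = 0)
    (hXX : ∀ m n, ⁅X m, X n⁆ = 0)
    (hMX : ∀ m n k, ⁅M m n, X k⁆ = 0)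
    (hMP : ∀ m n k, ⁅M m n, P k⁆ = 0)
    (hanti : ∀ m n, M m n = - M n m)
    (hso : ∀ m n k l, ⁅M m n, M k l⁆ =
      eta p n k • M m l + eta p m l • M n k - eta p n l • M m k - eta p m k • M n l) :
    let D := p + q
    let J : Fin D → Fin D → A := fun m n => X m * P n - X n * P m + M m n
    let Pie : Fin D → A := fun n => ∑ m : Fin D, eps p m • (P m * J m n)
    let Pc : Fin D → A := fun n => ∑ m : Fin D, eps p m • (P m * M m n)
    let Psq : A := ∑ m : Fin D, eps p m • (P m * P m)
    let J2 : A := ∑ m : Fin D, ∑ n : Fin D, (eps p m * eps p n) • (J m n * J n m)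
    let M2 : A := ∑ m : Fin D, ∑ n : Fin D, (eps p m * eps p n) • (M m n * M n m)
    (∑ n : Fin D, eps p n • (Pie n * Pie n)) + (1 / 2 : ℝ) • (J2 * Psq) =
      (∑ n : Fin D, eps p n • (Pc n * Pc n)) + (1 / 2 : ℝ) • (M2 * Psq) := by
  show (∑ n : Fin (p + q), eps p n • ((∑ m : Fin (p + q), eps p m • (P m * (X m * P n - X n * P m + M m n))) * (∑ m : Fin (p + q), eps p m • (P m * (X m * P n - X n * P m + M m n))))) + (1 / 2 : ℝ) • ((∑ m : Fin (p + q), ∑ n : Fin (p + q), (eps p m * eps p n) • ((X m * P n - X n * P m + M m n) * (X n * P m - X m * P n + M n m))) * (∑ m : Fin (p + q), eps p m • (P m * P m))) = (∑ n : Fin (p + q), eps p n • ((∑ k : Fin (p + q), eps p k • (P k * M k n)) * (∑ k : Fin (p + q), eps p k • (P k * M k n)))) + (1 / 2 : ℝ) • ((∑ m : Fin (p + q), ∑ n : Fin (p + q), (eps p m * eps p n) • (M m n * M n m)) * (∑ m : Fin (p + q), eps p m • (P m * P m)))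
  -- basic facts
  have eps_sq : ∀ m : Fin (p + q), eps p m * eps p m = 1 := by
    intro m; simp only [eps]; split <;> norm_num
  have etaDiag : ∀ n : Fin (p + q), eta p n n = eps p n := by
    intro n; simp [eta]
  have half2 : ∀ x : A, (1 / 2 : ℝ) • (x + x) = x := by
    intro x; rw [← two_smul ℝ x, smul_smul]; norm_num
  have selfneg : ∀ x : A, x = -x → x = 0 := by
    intro x h
    have h2 : x + x = 0 := by nth_rewrite 2 [h]; exact add_neg_cancel x
    calc x = (1 / 2 : ℝ) • (x + x) := (half2 x).symm
    _ = 0 := by rw [h2, smul_zero]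
  have pX : ∀ m n, P m * X n = X n * P m + eta p m n • (1 : A) := by
    intro m n
    have h := hPX m n
    rw [Ring.lie_def, sub_eq_iff_eq_add] at h
    exact h.trans (add_comm _ _)
  have xP : ∀ a b, X a * P b = P b * X a - eta p b a • (1 : A) := by
    intro a b; exact eq_sub_of_add_eq (pX b a).symm
  have pp : ∀ m n, P m * P n = P n * P m := by
    intro m n
    have h := hPP m n
    rw [Ring.lie_def] at h
    exact sub_eq_zero.mp h
  have xx : ∀ m n, X m * X n = X n * X m := by
    intro m n
    have h := hXX m n
    rw [Ring.lie_def] at h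
    exact sub_eq_zero.mp h
  have mX : ∀ m n k, M m n * X k = X k * M m n := by
    intro m n k
    have h := hMX m n k
    rw [Ring.lie_def] at h
    exact sub_eq_zero.mp h
  have mP : ∀ m n k, M m n * P k = P k * M m n := by
    intro m n k
    have h := hMP m n k
    rw [Ring.lie_def] at h
    exact sub_eq_zero.mp h
  have Mdiag : ∀ n, M n n = 0 := fun n => selfneg _ (hanti n n)
  have mulSum : ∀ (c : Fin (p + q) → ℝ) (f : Fin (p + q) → A) (y : A),
      y * (∑ k, c k • f k) = ∑ k, c k • (y * f k) := by
    intro c f y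
    rw [Finset.mul_sum]
    exact Finset.sum_congr rfl fun k _ => mul_smul_comm _ _ _
  have sumMul : ∀ (c : Fin (p + q) → ℝ) (f : Fin (p + q) → A) (y : A),
      (∑ k, c k • f k) * y = ∑ k, c k • (f k * y) := by
    intro c f y
    rw [Finset.sum_mul]
    exact Finset.sum_congr rfl fun k _ => smul_mul_assoc _ _ _
  have sumEps2L : ∀ (n : Fin (p + q)) (f : Fin (p + q) → A),
      (∑ k, eps p k • (eta p n k • f k)) = f n := by
    intro n f
    have h0 : ∀ b ∈ Finset.univ, b ≠ n → eps p b • (eta p n b • f b) = 0 := by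
      intro b _ hb
      rw [show eta p n b = 0 from by simp only [eta]; exact if_neg fun h => hb h.symm,
        zero_smul, smul_zero]
    exact (Finset.sum_eq_single_of_mem n (Finset.mem_univ n) h0).trans
      (by rw [etaDiag n, smul_smul, eps_sq n, one_smul])
  have sumEps2R : ∀ (n : Fin (p + q)) (f : Fin (p + q) → A),
      (∑ k, eps p k • (eta p k n • f k)) = f n := by
    intro n f
    have h0 : ∀ b ∈ Finset.univ, b ≠ n → eps p b • (eta p b n • f b) = 0 := by
      intro b _ hb
      rw [show eta p b n = 0 from by simp only [eta]; exact if_neg hb, zero_smul, smul_zero]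
    exact (Finset.sum_eq_single_of_mem n (Finset.mem_univ n) h0).trans
      (by rw [etaDiag n, smul_smul, eps_sq n, one_smul])
  -- named elements
  set S : A := ∑ m : Fin (p + q), eps p m • (P m * X m) with hS
  set T : A := ∑ m : Fin (p + q), eps p m • (X m * P m) with hT
  set Q : A := ∑ m : Fin (p + q), eps p m • (P m * P m) with hQ
  set R : A := ∑ m : Fin (p + q), eps p m • (X m * X m) with hR
  set DA : A := ((p + q : ℕ) : ℝ) • (1 : A) with hDA
  set G : A := ∑ m : Fin (p + q), ∑ n : Fin (p + q),
      (eps p m * eps p n) • ((X m * P n) * M n m) with hG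
  clear_value S T Q R DA G
  have nsmulDA : ∀ x : A, (p + q) • x = DA * x := by
    intro x; rw [hDA, smul_mul_assoc, one_mul, Nat.cast_smul_eq_nsmul]
  have SeqT : S = T + DA := by
    rw [hS, hT, hDA]
    calc (∑ m : Fin (p + q), eps p m • (P m * X m))
        = ∑ m : Fin (p + q), (eps p m • (X m * P m) + eps p m • (eta p m m • (1 : A))) := by
          refine Finset.sum_congr rfl fun m _ => ?_
          rw [pX m m, smul_add]
      _ = (∑ m : Fin (p + q), eps p m • (X m * P m))
            + ∑ m : Fin (p + q), eps p m • (eta p m m • (1 : A)) := Finset.sum_add_distrib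
      _ = (∑ m : Fin (p + q), eps p m • (X m * P m)) + ((p + q : ℕ) : ℝ) • (1 : A) := by
          congr 1
          calc (∑ m : Fin (p + q), eps p m • (eta p m m • (1 : A)))
              = ∑ _m : Fin (p + q), (1 : A) := by
                refine Finset.sum_congr rfl fun m _ => ?_
                rw [etaDiag m, smul_smul, eps_sq m, one_smul]
            _ = ((p + q : ℕ) : ℝ) • (1 : A) := by
                rw [Finset.sum_const, Finset.card_univ, Fintype.card_fin,
                  Nat.cast_smul_eq_nsmul]
  -- commutation with S
  have SP : ∀ n, S * P n = P n * S - P n := by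
    intro n
    calc S * P n
        = ∑ m : Fin (p + q), eps p m • ((P m * X m) * P n) := by rw [hS, sumMul]
      _ = ∑ m : Fin (p + q), (eps p m • (P n * (P m * X m)) - eps p m • (eta p n m • P m)) := by
          refine Finset.sum_congr rfl fun m _ => ?_
          rw [show (P m * X m) * P n = P m * (X m * P n) from mul_assoc _ _ _, xP m n,
            mul_sub, mul_smul_comm, mul_one, ← mul_assoc, pp m n, mul_assoc, smul_sub]
      _ = (∑ m : Fin (p + q), eps p m • (P n * (P m * X m)))
            - ∑ m : Fin (p + q), eps p m • (eta p n m • P m) := Finset.sum_sub_distrib _ _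
      _ = P n * S - P n := by rw [← mulSum, ← hS, sumEps2L n (fun m => P m)]
  have PS : ∀ n, P n * S = S * P n + P n := by
    intro n; rw [SP n]; abel
  have SX : ∀ n, S * X n = X n * S + X n := by
    intro n
    calc S * X n
        = ∑ m : Fin (p + q), eps p m • ((P m * X m) * X n) := by rw [hS, sumMul]
      _ = ∑ m : Fin (p + q), (eps p m • (X n * (P m * X m)) + eps p m • (eta p m n • X m)) := by
          refine Finset.sum_congr rfl fun m _ => ?_
          rw [show (P m * X m) * X n = P m * (X m * X n) from mul_assoc _ _ _, xx m n,
            ← mul_assoc, pX m n, add_mul, smul_mul_assoc, one_mul, mul_assoc, smul_add]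
      _ = (∑ m : Fin (p + q), eps p m • (X n * (P m * X m)))
            + ∑ m : Fin (p + q), eps p m • (eta p m n • X m) := Finset.sum_add_distrib
      _ = X n * S + X n := by rw [← mulSum, ← hS, sumEps2R n (fun m => X m)]
  have XS : ∀ n, X n * S = S * X n - X n := by
    intro n; rw [SX n]; abel
  have QP : ∀ n, Q * P n = P n * Q := by
    intro n
    rw [hQ]
    calc (∑ m : Fin (p + q), eps p m • (P m * P m)) * P n
        = ∑ m : Fin (p + q), eps p m • ((P m * P m) * P n) := sumMul _ _ _
      _ = ∑ m : Fin (p + q), eps p m • (P n * (P m * P m)) := by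
          refine Finset.sum_congr rfl fun m _ => ?_
          rw [mul_assoc, pp m n, ← mul_assoc, pp m n, mul_assoc]
      _ = P n * ∑ m : Fin (p + q), eps p m • (P m * P m) := (mulSum _ _ _).symm
  have QX : ∀ n, Q * X n = X n * Q + (P n + P n) := by
    intro n
    rw [hQ]
    calc (∑ m : Fin (p + q), eps p m • (P m * P m)) * X n
        = ∑ m : Fin (p + q), eps p m • ((P m * P m) * X n) := sumMul _ _ _
      _ = ∑ m : Fin (p + q), (eps p m • (X n * (P m * P m))
            + (eps p m • (eta p m n • P m) + eps p m • (eta p m n • P m))) := by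
          refine Finset.sum_congr rfl fun m _ => ?_
          rw [show (P m * P m) * X n = P m * (P m * X n) from mul_assoc _ _ _, pX m n,
            mul_add, mul_smul_comm, mul_one, ← mul_assoc, pX m n, add_mul, smul_mul_assoc,
            one_mul, mul_assoc, smul_add, smul_add]
          abel
      _ = (∑ m : Fin (p + q), eps p m • (X n * (P m * P m)))
            + ((∑ m : Fin (p + q), eps p m • (eta p m n • P m))
              + ∑ m : Fin (p + q), eps p m • (eta p m n • P m)) := by
          rw [Finset.sum_add_distrib, Finset.sum_add_distrib]
      _ = X n * (∑ m : Fin (p + q), eps p m • (P m * P m)) + (P n + P n) := by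
          rw [mulSum, sumEps2R n (fun m => P m)]
  have QS : Q * S = S * Q + (Q + Q) := by
    calc Q * S
        = ∑ m : Fin (p + q), eps p m • (Q * (P m * X m)) := by rw [hS, mulSum]
      _ = ∑ m : Fin (p + q), (eps p m • ((P m * X m) * Q)
            + (eps p m • (P m * P m) + eps p m • (P m * P m))) := by
          refine Finset.sum_congr rfl fun m _ => ?_
          rw [← mul_assoc, QP m, mul_assoc, QX m, mul_add, mul_add, ← mul_assoc, smul_add,
            smul_add]
      _ = (∑ m : Fin (p + q), eps p m • ((P m * X m) * Q))
            + ((∑ m : Fin (p + q), eps p m • (P m * P m))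
              + ∑ m : Fin (p + q), eps p m • (P m * P m)) := by
          rw [Finset.sum_add_distrib, Finset.sum_add_distrib]
      _ = S * Q + (Q + Q) := by rw [← sumMul, ← hS, ← hQ]
  have TP : ∀ n, T * P n = P n * T - P n := by
    intro n
    calc T * P n
        = ∑ k : Fin (p + q), eps p k • ((X k * P k) * P n) := by rw [hT, sumMul]
      _ = ∑ k : Fin (p + q), (eps p k • (P n * (X k * P k)) - eps p k • (eta p n k • P k)) := by
          refine Finset.sum_congr rfl fun k _ => ?_
          rw [show (X k * P k) * P n = X k * (P k * P n) from mul_assoc _ _ _, pp k n,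
            ← mul_assoc, xP k n, sub_mul, smul_mul_assoc, one_mul, mul_assoc, smul_sub]
      _ = (∑ k : Fin (p + q), eps p k • (P n * (X k * P k)))
            - ∑ k : Fin (p + q), eps p k • (eta p n k • P k) := Finset.sum_sub_distrib _ _
      _ = P n * T - P n := by rw [← mulSum, ← hT, sumEps2L n (fun k => P k)]
  have PXP : ∀ n, (∑ m : Fin (p + q), eps p m • (P m * (X n * P m))) = X n * Q + P n := by
    intro n
    calc (∑ m : Fin (p + q), eps p m • (P m * (X n * P m)))
        = ∑ m : Fin (p + q), (eps p m • (X n * (P m * P m)) + eps p m • (eta p m n • P m)) := by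
          refine Finset.sum_congr rfl fun m _ => ?_
          rw [← mul_assoc, pX m n, add_mul, smul_mul_assoc, one_mul, mul_assoc, smul_add]
      _ = (∑ m : Fin (p + q), eps p m • (X n * (P m * P m)))
            + ∑ m : Fin (p + q), eps p m • (eta p m n • P m) := Finset.sum_add_distrib
      _ = X n * (∑ m : Fin (p + q), eps p m • (P m * P m)) + P n := by
          rw [mulSum, sumEps2R n (fun m => P m)]
      _ = X n * Q + P n := by rw [← hQ]
  -- lemmas about Pc n = ∑ k, eps p k • (P k * M k n)
  have PCX : ∀ n k, (∑ j : Fin (p + q), eps p j • (P j * M j n)) * X k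
      = X k * (∑ j : Fin (p + q), eps p j • (P j * M j n)) + M k n := by
    intro n k
    calc (∑ j : Fin (p + q), eps p j • (P j * M j n)) * X k
        = ∑ j : Fin (p + q), eps p j • ((P j * M j n) * X k) := sumMul _ _ _
      _ = ∑ j : Fin (p + q), (eps p j • (X k * (P j * M j n)) + eps p j • (eta p j k • M j n)) := by
          refine Finset.sum_congr rfl fun j _ => ?_
          rw [mul_assoc, mX j n k, ← mul_assoc, pX j k, add_mul, smul_mul_assoc, one_mul,
            mul_assoc, smul_add]
      _ = (∑ j : Fin (p + q), eps p j • (X k * (P j * M j n)))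
            + ∑ j : Fin (p + q), eps p j • (eta p j k • M j n) := Finset.sum_add_distrib
      _ = X k * (∑ j : Fin (p + q), eps p j • (P j * M j n)) + M k n := by
          rw [← mulSum, sumEps2R k (fun j => M j n)]
  have PCXdiag : ∀ n, (∑ j : Fin (p + q), eps p j • (P j * M j n)) * X n
      = X n * (∑ j : Fin (p + q), eps p j • (P j * M j n)) := by
    intro n; rw [PCX n n, Mdiag n, add_zero]
  have PPC : ∀ n k, P k * (∑ j : Fin (p + q), eps p j • (P j * M j n))
      = (∑ j : Fin (p + q), eps p j • (P j * M j n)) * P k := by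
    intro n k
    calc P k * (∑ j : Fin (p + q), eps p j • (P j * M j n))
        = ∑ j : Fin (p + q), eps p j • (P k * (P j * M j n)) := mulSum _ _ _
      _ = ∑ j : Fin (p + q), eps p j • ((P j * M j n) * P k) := by
          refine Finset.sum_congr rfl fun j _ => ?_
          rw [← mul_assoc, pp k j, mul_assoc, ← mP j n k, ← mul_assoc]
      _ = (∑ j : Fin (p + q), eps p j • (P j * M j n)) * P k := (sumMul _ _ _).symm
  have QPC : ∀ n, Q * (∑ j : Fin (p + q), eps p j • (P j * M j n))
      = (∑ j : Fin (p + q), eps p j • (P j * M j n)) * Q := by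
    intro n
    calc Q * (∑ j : Fin (p + q), eps p j • (P j * M j n))
        = ∑ m : Fin (p + q), eps p m • ((P m * P m) * (∑ j : Fin (p + q), eps p j • (P j * M j n))) := by
          rw [hQ, sumMul]
      _ = ∑ m : Fin (p + q), eps p m • ((∑ j : Fin (p + q), eps p j • (P j * M j n)) * (P m * P m)) := by
          refine Finset.sum_congr rfl fun m _ => ?_
          rw [mul_assoc, PPC, ← mul_assoc, PPC, mul_assoc]
      _ = (∑ j : Fin (p + q), eps p j • (P j * M j n)) * Q := by rw [← mulSum, ← hQ]
  have PCS : ∀ n, (∑ j : Fin (p + q), eps p j • (P j * M j n)) * S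
      = S * (∑ j : Fin (p + q), eps p j • (P j * M j n))
        + (∑ j : Fin (p + q), eps p j • (P j * M j n)) := by
    intro n
    calc (∑ j : Fin (p + q), eps p j • (P j * M j n)) * S
        = ∑ k : Fin (p + q), eps p k • ((∑ j : Fin (p + q), eps p j • (P j * M j n)) * (P k * X k)) := by
          rw [hS, mulSum]
      _ = ∑ k : Fin (p + q), (eps p k • ((P k * X k) * (∑ j : Fin (p + q), eps p j • (P j * M j n)))
            + eps p k • (P k * M k n)) := by
          refine Finset.sum_congr rfl fun k _ => ?_
          rw [← mul_assoc, ← PPC n k, mul_assoc, PCX n k, mul_add, ← mul_assoc, smul_add]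
      _ = (∑ k : Fin (p + q), eps p k • ((P k * X k) * (∑ j : Fin (p + q), eps p j • (P j * M j n))))
            + ∑ k : Fin (p + q), eps p k • (P k * M k n) := Finset.sum_add_distrib
      _ = S * (∑ j : Fin (p + q), eps p j • (P j * M j n))
            + (∑ j : Fin (p + q), eps p j • (P j * M j n)) := by
          rw [← sumMul, ← hS]
  have Z0 : (∑ n : Fin (p + q), eps p n • ((∑ j : Fin (p + q), eps p j • (P j * M j n)) * P n)) = 0 := by
    have h1 : (∑ n : Fin (p + q), eps p n • ((∑ j : Fin (p + q), eps p j • (P j * M j n)) * P n))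
        = ∑ n : Fin (p + q), ∑ j : Fin (p + q), (eps p n * eps p j) • ((P j * P n) * M j n) := by
      refine Finset.sum_congr rfl fun n _ => ?_
      rw [sumMul, Finset.smul_sum]
      refine Finset.sum_congr rfl fun j _ => ?_
      rw [smul_smul, show (P j * M j n) * P n = (P j * P n) * M j n from by
        rw [mul_assoc, mP j n n, ← mul_assoc]]
    have h2 : (∑ n : Fin (p + q), ∑ j : Fin (p + q), (eps p n * eps p j) • ((P j * P n) • (0:A)))
        = 0 := by simp
    have h3 : (∑ n : Fin (p + q), ∑ j : Fin (p + q), (eps p n * eps p j) • ((P j * P n) * M j n))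
        = -(∑ n : Fin (p + q), ∑ j : Fin (p + q), (eps p n * eps p j) • ((P j * P n) * M j n)) := by
      nth_rewrite 1 [Finset.sum_comm]
      calc (∑ j : Fin (p + q), ∑ n : Fin (p + q), (eps p n * eps p j) • ((P j * P n) * M j n))
          = ∑ j : Fin (p + q), ∑ n : Fin (p + q),
              -((eps p j * eps p n) • ((P n * P j) * M n j)) := by
            refine Finset.sum_congr rfl fun a _ => Finset.sum_congr rfl fun b _ => ?_
            rw [hanti b a, mul_neg, smul_neg, neg_neg, mul_comm (eps p b) (eps p a), pp a b]
        _ = -(∑ n : Fin (p + q), ∑ j : Fin (p + q), (eps p n * eps p j) • ((P j * P n) * M j n)) := by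
            simp [Finset.sum_neg_distrib]
    rw [h1]
    exact selfneg _ h3
  have hGQ : (∑ n : Fin (p + q), eps p n •
        ((X n * (∑ j : Fin (p + q), eps p j • (P j * M j n))) * Q)) = G * Q := by
    have hGQ2 : G * Q = ∑ m : Fin (p + q), ∑ n : Fin (p + q),
        (eps p m * eps p n) • (((X m * P n) * M n m) * Q) := by
      rw [hG, Finset.sum_mul]
      exact Finset.sum_congr rfl fun m _ => sumMul _ _ _
    calc (∑ n : Fin (p + q), eps p n • ((X n * (∑ j : Fin (p + q), eps p j • (P j * M j n))) * Q))
        = ∑ n : Fin (p + q), ∑ j : Fin (p + q), (eps p n * eps p j) • (((X n * P j) * M j n) * Q) := by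
          refine Finset.sum_congr rfl fun n _ => ?_
          rw [mulSum, sumMul, Finset.smul_sum]
          refine Finset.sum_congr rfl fun j _ => ?_
          rw [smul_smul, show (X n * (P j * M j n)) * Q = ((X n * P j) * M j n) * Q from by
            rw [← mul_assoc]]
      _ = G * Q := hGQ2.symm
  -- rearrangement lemmas for single products
  have r1 : ∀ n, (S * P n) * (S * P n) = S * S * (P n * P n) + S * (P n * P n) := by
    intro n
    calc (S * P n) * (S * P n) = S * ((P n * S) * P n) := by noncomm_ring
      _ = S * ((S * P n + P n) * P n) := by rw [PS n]
      _ = S * S * (P n * P n) + S * (P n * P n) := by noncomm_ring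
  have r2 : ∀ n, (S * P n) * (X n * Q) = S * ((P n * X n) * Q) := by
    intro n; noncomm_ring
  have r3 : ∀ n, (S * P n) * P n = S * (P n * P n) := by
    intro n; rw [mul_assoc]
  have r4 : ∀ n, (S * P n) * (∑ j : Fin (p + q), eps p j • (P j * M j n)) = S * ((∑ j : Fin (p + q), eps p j • (P j * M j n)) * P n) := by
    intro n; rw [mul_assoc, PPC n n]
  have r5 : ∀ n, (X n * Q) * (S * P n) = S * ((X n * P n) * Q) + (X n * P n) * Q := by
    intro n
    calc (X n * Q) * (S * P n) = X n * ((Q * S) * P n) := by noncomm_ring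
      _ = X n * ((S * Q + (Q + Q)) * P n) := by rw [QS]
      _ = (X n * S) * (Q * P n) + (X n * (Q * P n) + X n * (Q * P n)) := by noncomm_ring
      _ = (X n * S) * (P n * Q) + (X n * (P n * Q) + X n * (P n * Q)) := by rw [QP n]
      _ = (S * X n - X n) * (P n * Q) + (X n * (P n * Q) + X n * (P n * Q)) := by rw [XS n]
      _ = S * ((X n * P n) * Q) + (X n * P n) * Q := by noncomm_ring
  have r6 : ∀ n, (X n * Q) * (X n * Q)
      = (X n * X n) * (Q * Q) + ((X n * P n) * Q + (X n * P n) * Q) := by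
    intro n
    calc (X n * Q) * (X n * Q) = X n * ((Q * X n) * Q) := by noncomm_ring
      _ = X n * ((X n * Q + (P n + P n)) * Q) := by rw [QX n]
      _ = (X n * X n) * (Q * Q) + ((X n * P n) * Q + (X n * P n) * Q) := by noncomm_ring
  have r7 : ∀ n, (X n * Q) * P n = (X n * P n) * Q := by
    intro n; rw [mul_assoc, QP n, ← mul_assoc]
  have r8 : ∀ n, (X n * Q) * (∑ j : Fin (p + q), eps p j • (P j * M j n)) = (X n * (∑ j : Fin (p + q), eps p j • (P j * M j n))) * Q := by
    intro n; rw [mul_assoc, QPC n, ← mul_assoc]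
  have r9 : ∀ n, P n * (S * P n) = S * (P n * P n) + P n * P n := by
    intro n; rw [← mul_assoc, PS n, add_mul, mul_assoc]
  have r10 : ∀ n, P n * (X n * Q) = (P n * X n) * Q := by
    intro n; rw [mul_assoc]
  have r12 : ∀ n, (∑ j : Fin (p + q), eps p j • (P j * M j n)) * (S * P n) = S * ((∑ j : Fin (p + q), eps p j • (P j * M j n)) * P n) + (∑ j : Fin (p + q), eps p j • (P j * M j n)) * P n := by
    intro n; rw [← mul_assoc, PCS n, add_mul, mul_assoc]
  have r13 : ∀ n, (∑ j : Fin (p + q), eps p j • (P j * M j n)) * (X n * Q) = (X n * (∑ j : Fin (p + q), eps p j • (P j * M j n))) * Q := by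
    intro n; rw [← mul_assoc, PCXdiag n]
  -- the expansion of Pie n
  have PieEq : ∀ n, (∑ m : Fin (p + q), eps p m • (P m * (X m * P n - X n * P m + M m n)))
      = S * P n - (X n * Q + P n) + (∑ j : Fin (p + q), eps p j • (P j * M j n)) := by
    intro n
    calc (∑ m : Fin (p + q), eps p m • (P m * (X m * P n - X n * P m + M m n)))
        = ∑ m : Fin (p + q), eps p m •
            ((P m * X m) * P n - P m * (X n * P m) + P m * M m n) := by
          refine Finset.sum_congr rfl fun m _ => ?_
          rw [show P m * (X m * P n - X n * P m + M m n)
            = (P m * X m) * P n - P m * (X n * P m) + P m * M m n from by noncomm_ring]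
      _ = ((∑ m : Fin (p + q), eps p m • ((P m * X m) * P n))
            - ∑ m : Fin (p + q), eps p m • (P m * (X n * P m)))
            + ∑ m : Fin (p + q), eps p m • (P m * M m n) := by
          simp only [smul_sub, smul_add, Finset.sum_add_distrib, Finset.sum_sub_distrib]
      _ = S * P n - (X n * Q + P n) + (∑ j : Fin (p + q), eps p j • (P j * M j n)) := by
          rw [← sumMul, ← hS, PXP n]
  -- per-n expansion of Pie n * Pie n
  have PieSq : ∀ n, (S * P n - (X n * Q + P n) + (∑ j : Fin (p + q), eps p j • (P j * M j n))) * (S * P n - (X n * Q + P n) + (∑ j : Fin (p + q), eps p j • (P j * M j n)))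
      = S * S * (P n * P n) - S * (P n * P n) - S * ((P n * X n) * Q) - S * ((X n * P n) * Q)
        + ((X n * P n) * Q + (X n * P n) * Q) + (X n * X n) * (Q * Q) + (P n * X n) * Q
        + (S * ((∑ j : Fin (p + q), eps p j • (P j * M j n)) * P n) + S * ((∑ j : Fin (p + q), eps p j • (P j * M j n)) * P n)) - (∑ j : Fin (p + q), eps p j • (P j * M j n)) * P n
        - ((X n * (∑ j : Fin (p + q), eps p j • (P j * M j n))) * Q + (X n * (∑ j : Fin (p + q), eps p j • (P j * M j n))) * Q) + (∑ j : Fin (p + q), eps p j • (P j * M j n)) * (∑ j : Fin (p + q), eps p j • (P j * M j n)) := by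
    intro n
    calc (S * P n - (X n * Q + P n) + (∑ j : Fin (p + q), eps p j • (P j * M j n))) * (S * P n - (X n * Q + P n) + (∑ j : Fin (p + q), eps p j • (P j * M j n)))
        = (S * P n) * (S * P n) - (S * P n) * (X n * Q) - (S * P n) * P n + (S * P n) * (∑ j : Fin (p + q), eps p j • (P j * M j n))
          - (X n * Q) * (S * P n) - P n * (S * P n)
          + (X n * Q) * (X n * Q) + (X n * Q) * P n + P n * (X n * Q) + P n * P n
          - (X n * Q) * (∑ j : Fin (p + q), eps p j • (P j * M j n)) - P n * (∑ j : Fin (p + q), eps p j • (P j * M j n))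
          + (∑ j : Fin (p + q), eps p j • (P j * M j n)) * (S * P n) - (∑ j : Fin (p + q), eps p j • (P j * M j n)) * (X n * Q) - (∑ j : Fin (p + q), eps p j • (P j * M j n)) * P n + (∑ j : Fin (p + q), eps p j • (P j * M j n)) * (∑ j : Fin (p + q), eps p j • (P j * M j n)) := by
          noncomm_ring
      _ = _ := by
          rw [r1 n, r2 n, r3 n, r4 n, r5 n, r6 n, r7 n, r8 n, r9 n, r10 n, PPC n n, r12 n, r13 n]
          abel
  -- summed building blocks
  have A1 : (∑ n : Fin (p + q), eps p n • (S * S * (P n * P n))) = S * (S * Q) := by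
    calc (∑ n : Fin (p + q), eps p n • (S * S * (P n * P n)))
        = (S * S) * ∑ n : Fin (p + q), eps p n • (P n * P n) :=
          (mulSum (eps p) (fun n => P n * P n) (S * S)).symm
      _ = S * (S * Q) := by rw [← hQ, mul_assoc]
  have A2 : (∑ n : Fin (p + q), eps p n • (S * (P n * P n))) = S * Q := by
    calc (∑ n : Fin (p + q), eps p n • (S * (P n * P n)))
        = S * ∑ n : Fin (p + q), eps p n • (P n * P n) :=
          (mulSum (eps p) (fun n => P n * P n) S).symm
      _ = S * Q := by rw [← hQ]
  have A3a : (∑ n : Fin (p + q), eps p n • ((P n * X n) * Q)) = S * Q := by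
    calc (∑ n : Fin (p + q), eps p n • ((P n * X n) * Q))
        = (∑ n : Fin (p + q), eps p n • (P n * X n)) * Q :=
          (sumMul (eps p) (fun n => P n * X n) Q).symm
      _ = S * Q := by rw [← hS]
  have A3 : (∑ n : Fin (p + q), eps p n • (S * ((P n * X n) * Q))) = S * (S * Q) := by
    calc (∑ n : Fin (p + q), eps p n • (S * ((P n * X n) * Q)))
        = S * ∑ n : Fin (p + q), eps p n • ((P n * X n) * Q) :=
          (mulSum (eps p) (fun n => (P n * X n) * Q) S).symm
      _ = S * (S * Q) := by rw [A3a]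
  have A5 : (∑ n : Fin (p + q), eps p n • ((X n * P n) * Q)) = T * Q := by
    calc (∑ n : Fin (p + q), eps p n • ((X n * P n) * Q))
        = (∑ n : Fin (p + q), eps p n • (X n * P n)) * Q :=
          (sumMul (eps p) (fun n => X n * P n) Q).symm
      _ = T * Q := by rw [← hT]
  have A4 : (∑ n : Fin (p + q), eps p n • (S * ((X n * P n) * Q))) = S * (T * Q) := by
    calc (∑ n : Fin (p + q), eps p n • (S * ((X n * P n) * Q)))
        = S * ∑ n : Fin (p + q), eps p n • ((X n * P n) * Q) :=
          (mulSum (eps p) (fun n => (X n * P n) * Q) S).symm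
      _ = S * (T * Q) := by rw [A5]
  have A6 : (∑ n : Fin (p + q), eps p n • ((X n * X n) * (Q * Q))) = R * (Q * Q) := by
    calc (∑ n : Fin (p + q), eps p n • ((X n * X n) * (Q * Q)))
        = (∑ n : Fin (p + q), eps p n • (X n * X n)) * (Q * Q) :=
          (sumMul (eps p) (fun n => X n * X n) (Q * Q)).symm
      _ = R * (Q * Q) := by rw [← hR]
  have A8 : (∑ n : Fin (p + q), eps p n • (S * ((∑ j : Fin (p + q), eps p j • (P j * M j n)) * P n))) = 0 := by
    calc (∑ n : Fin (p + q), eps p n • (S * ((∑ j : Fin (p + q), eps p j • (P j * M j n)) * P n)))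
        = S * ∑ n : Fin (p + q), eps p n • ((∑ j : Fin (p + q), eps p j • (P j * M j n)) * P n) :=
          (mulSum (eps p) (fun n => (∑ j : Fin (p + q), eps p j • (P j * M j n)) * P n) S).symm
      _ = 0 := by rw [Z0, mul_zero]
  -- the summed LHS kinetic part
  have HPie : (∑ n : Fin (p + q), eps p n •
        ((∑ m : Fin (p + q), eps p m • (P m * (X m * P n - X n * P m + M m n)))
          * (∑ m : Fin (p + q), eps p m • (P m * (X m * P n - X n * P m + M m n)))))
      = (∑ n : Fin (p + q), eps p n • ((∑ j : Fin (p + q), eps p j • (P j * M j n)) * (∑ j : Fin (p + q), eps p j • (P j * M j n))))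
        + (-(S * (T * Q)) + (T * Q + T * Q) + R * (Q * Q) - (G * Q + G * Q)) := by
    calc (∑ n : Fin (p + q), eps p n •
        ((∑ m : Fin (p + q), eps p m • (P m * (X m * P n - X n * P m + M m n)))
          * (∑ m : Fin (p + q), eps p m • (P m * (X m * P n - X n * P m + M m n)))))
        = ∑ n : Fin (p + q), eps p n •
            (S * S * (P n * P n) - S * (P n * P n) - S * ((P n * X n) * Q)
              - S * ((X n * P n) * Q)
              + ((X n * P n) * Q + (X n * P n) * Q) + (X n * X n) * (Q * Q) + (P n * X n) * Q
              + (S * ((∑ j : Fin (p + q), eps p j • (P j * M j n)) * P n) + S * ((∑ j : Fin (p + q), eps p j • (P j * M j n)) * P n)) - (∑ j : Fin (p + q), eps p j • (P j * M j n)) * P n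
              - ((X n * (∑ j : Fin (p + q), eps p j • (P j * M j n))) * Q + (X n * (∑ j : Fin (p + q), eps p j • (P j * M j n))) * Q) + (∑ j : Fin (p + q), eps p j • (P j * M j n)) * (∑ j : Fin (p + q), eps p j • (P j * M j n))) := by
          refine Finset.sum_congr rfl fun n _ => ?_
          rw [PieEq n, PieSq n]
      _ = _ := by
          simp only [smul_sub, smul_add, Finset.sum_add_distrib, Finset.sum_sub_distrib]
          rw [A1, A2, A3, A4, A5, A6, A3a, A8, Z0, hGQ]
          abel
  -- pairwise product of two J's
  have ugen : ∀ a b c d : Fin (p + q), (X a * P b) * (X c * P d)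
      = (X a * X c) * (P b * P d) + eta p b c • (X a * P d) := by
    intro a b c d
    calc (X a * P b) * (X c * P d) = X a * ((P b * X c) * P d) := by noncomm_ring
      _ = X a * ((X c * P b + eta p b c • 1) * P d) := by rw [pX b c]
      _ = X a * ((X c * P b) * P d) + eta p b c • (X a * P d) := by
          rw [add_mul, smul_mul_assoc, one_mul, mul_add, mul_smul_comm]
      _ = (X a * X c) * (P b * P d) + eta p b c • (X a * P d) := by
          rw [show X a * ((X c * P b) * P d) = (X a * X c) * (P b * P d) from by noncomm_ring]
  have wcomm : ∀ k l a b : Fin (p + q), M k l * (X a * P b) = (X a * P b) * M k l := by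
    intro k l a b
    rw [← mul_assoc, mX k l a, mul_assoc, mP k l b, ← mul_assoc]
  have Fpair : ∀ m n : Fin (p + q),
      (X m * P n - X n * P m + M m n) * (X n * P m - X m * P n + M n m)
      = ((X m * X n) * (P n * P m) + eta p n n • (X m * P m))
        - ((X m * X m) * (P n * P n) + eta p n m • (X m * P n))
        - ((X n * X n) * (P m * P m) + eta p m n • (X n * P m))
        + ((X n * X m) * (P m * P n) + eta p m m • (X n * P n))
        + (((X m * P n) * M n m + (X m * P n) * M n m)
          - ((X n * P m) * M n m + (X n * P m) * M n m))
        + M m n * M n m := by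
    intro m n
    calc (X m * P n - X n * P m + M m n) * (X n * P m - X m * P n + M n m)
        = (X m * P n) * (X n * P m) - (X m * P n) * (X m * P n) + (X m * P n) * M n m
          - (X n * P m) * (X n * P m) + (X n * P m) * (X m * P n) - (X n * P m) * M n m
          + M m n * (X n * P m) - M m n * (X m * P n) + M m n * M n m := by noncomm_ring
      _ = _ := by
          rw [ugen m n n m, ugen m n m n, ugen n m n m, ugen n m m n,
            wcomm m n n m, wcomm m n m n,
            show (X n * P m) * M m n = -((X n * P m) * M n m) from by
              rw [hanti m n, mul_neg],
            show (X m * P n) * M m n = -((X m * P n) * M n m) from by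
              rw [hanti m n, mul_neg]]
          abel
  -- double-sum building blocks
  have E1 : (∑ m : Fin (p + q), ∑ n : Fin (p + q),
        (eps p m * eps p n) • ((X m * X n) * (P n * P m))) = T * T - T := by
    calc (∑ m : Fin (p + q), ∑ n : Fin (p + q),
          (eps p m * eps p n) • ((X m * X n) * (P n * P m)))
        = ∑ m : Fin (p + q), eps p m • ((X m * P m) * T - X m * P m) := by
          refine Finset.sum_congr rfl fun m _ => ?_
          calc (∑ n : Fin (p + q), (eps p m * eps p n) • ((X m * X n) * (P n * P m)))
              = eps p m • ∑ n : Fin (p + q), eps p n • ((X m * X n) * (P n * P m)) := by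
                rw [Finset.smul_sum]
                exact Finset.sum_congr rfl fun n _ => mul_smul _ _ _
            _ = eps p m • ((X m * P m) * T - X m * P m) := by
                congr 1
                calc (∑ n : Fin (p + q), eps p n • ((X m * X n) * (P n * P m)))
                    = ∑ n : Fin (p + q), eps p n • (X m * ((X n * P n) * P m)) := by
                      refine Finset.sum_congr rfl fun n _ => ?_
                      rw [show (X m * X n) * (P n * P m) = X m * ((X n * P n) * P m) from by
                        noncomm_ring]
                  _ = X m * (T * P m) := by rw [← mulSum, ← sumMul, ← hT]
                  _ = (X m * P m) * T - X m * P m := by rw [TP m]; noncomm_ring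
      _ = (∑ m : Fin (p + q), eps p m • ((X m * P m) * T))
            - ∑ m : Fin (p + q), eps p m • (X m * P m) := by
          simp only [smul_sub, Finset.sum_sub_distrib]
      _ = T * T - T := by rw [← sumMul, ← hT]
  have E7 : (∑ m : Fin (p + q), ∑ n : Fin (p + q),
        (eps p m * eps p n) • ((X n * X m) * (P m * P n))) = T * T - T := by
    rw [Finset.sum_comm]
    calc (∑ n : Fin (p + q), ∑ m : Fin (p + q),
          (eps p m * eps p n) • ((X n * X m) * (P m * P n)))
        = ∑ n : Fin (p + q), eps p n • ((X n * P n) * T - X n * P n) := by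
          refine Finset.sum_congr rfl fun n _ => ?_
          calc (∑ m : Fin (p + q), (eps p m * eps p n) • ((X n * X m) * (P m * P n)))
              = eps p n • ∑ m : Fin (p + q), eps p m • ((X n * X m) * (P m * P n)) := by
                rw [Finset.smul_sum]
                refine Finset.sum_congr rfl fun m _ => ?_
                rw [mul_comm (eps p m) (eps p n), mul_smul]
            _ = eps p n • ((X n * P n) * T - X n * P n) := by
                congr 1
                calc (∑ m : Fin (p + q), eps p m • ((X n * X m) * (P m * P n)))
                    = ∑ m : Fin (p + q), eps p m • (X n * ((X m * P m) * P n)) := by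
                      refine Finset.sum_congr rfl fun m _ => ?_
                      rw [show (X n * X m) * (P m * P n) = X n * ((X m * P m) * P n) from by
                        noncomm_ring]
                  _ = X n * (T * P n) := by rw [← mulSum, ← sumMul, ← hT]
                  _ = (X n * P n) * T - X n * P n := by rw [TP n]; noncomm_ring
      _ = (∑ n : Fin (p + q), eps p n • ((X n * P n) * T))
            - ∑ n : Fin (p + q), eps p n • (X n * P n) := by
          simp only [smul_sub, Finset.sum_sub_distrib]
      _ = T * T - T := by rw [← sumMul, ← hT]
  have E3 : (∑ m : Fin (p + q), ∑ n : Fin (p + q),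
        (eps p m * eps p n) • ((X m * X m) * (P n * P n))) = R * Q := by
    calc (∑ m : Fin (p + q), ∑ n : Fin (p + q),
          (eps p m * eps p n) • ((X m * X m) * (P n * P n)))
        = ∑ m : Fin (p + q), eps p m • ((X m * X m) * Q) := by
          refine Finset.sum_congr rfl fun m _ => ?_
          calc (∑ n : Fin (p + q), (eps p m * eps p n) • ((X m * X m) * (P n * P n)))
              = eps p m • ∑ n : Fin (p + q), eps p n • ((X m * X m) * (P n * P n)) := by
                rw [Finset.smul_sum]
                exact Finset.sum_congr rfl fun n _ => mul_smul _ _ _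
            _ = eps p m • ((X m * X m) * Q) := by rw [← mulSum, ← hQ]
      _ = R * Q := by rw [← sumMul, ← hR]
  have E5 : (∑ m : Fin (p + q), ∑ n : Fin (p + q),
        (eps p m * eps p n) • ((X n * X n) * (P m * P m))) = R * Q := by
    calc (∑ m : Fin (p + q), ∑ n : Fin (p + q),
          (eps p m * eps p n) • ((X n * X n) * (P m * P m)))
        = ∑ m : Fin (p + q), eps p m • (R * (P m * P m)) := by
          refine Finset.sum_congr rfl fun m _ => ?_
          calc (∑ n : Fin (p + q), (eps p m * eps p n) • ((X n * X n) * (P m * P m)))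
              = eps p m • ∑ n : Fin (p + q), eps p n • ((X n * X n) * (P m * P m)) := by
                rw [Finset.smul_sum]
                exact Finset.sum_congr rfl fun n _ => mul_smul _ _ _
            _ = eps p m • (R * (P m * P m)) := by rw [← sumMul, ← hR]
      _ = R * Q := by rw [← mulSum, ← hQ]
  have E2 : (∑ m : Fin (p + q), ∑ n : Fin (p + q),
        (eps p m * eps p n) • (eta p n n • (X m * P m))) = DA * T := by
    calc (∑ m : Fin (p + q), ∑ n : Fin (p + q),
          (eps p m * eps p n) • (eta p n n • (X m * P m)))
        = ∑ m : Fin (p + q), (p + q) • (eps p m • (X m * P m)) := by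
          refine Finset.sum_congr rfl fun m _ => ?_
          rw [show (∑ n : Fin (p + q), (eps p m * eps p n) • (eta p n n • (X m * P m)))
              = ∑ _n : Fin (p + q), eps p m • (X m * P m) from
            Finset.sum_congr rfl fun n _ => by
              rw [etaDiag n, smul_smul, mul_assoc, eps_sq n, mul_one],
            Finset.sum_const, Finset.card_univ, Fintype.card_fin]
      _ = (p + q) • ∑ m : Fin (p + q), eps p m • (X m * P m) := by rw [Finset.smul_sum]
      _ = DA * T := by rw [← hT, nsmulDA]
  have E8 : (∑ m : Fin (p + q), ∑ n : Fin (p + q),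
        (eps p m * eps p n) • (eta p m m • (X n * P n))) = DA * T := by
    calc (∑ m : Fin (p + q), ∑ n : Fin (p + q),
          (eps p m * eps p n) • (eta p m m • (X n * P n)))
        = ∑ _m : Fin (p + q), T := by
          refine Finset.sum_congr rfl fun m _ => ?_
          calc (∑ n : Fin (p + q), (eps p m * eps p n) • (eta p m m • (X n * P n)))
              = ∑ n : Fin (p + q), eps p n • (X n * P n) := by
                refine Finset.sum_congr rfl fun n _ => ?_
                rw [etaDiag m, smul_smul,
                  show eps p m * eps p n * eps p m = eps p n from by
                    rw [mul_comm (eps p m) (eps p n), mul_assoc, eps_sq m, mul_one]]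
            _ = T := hT.symm
      _ = (p + q) • T := by rw [Finset.sum_const, Finset.card_univ, Fintype.card_fin]
      _ = DA * T := by rw [nsmulDA]
  have E4 : (∑ m : Fin (p + q), ∑ n : Fin (p + q),
        (eps p m * eps p n) • (eta p n m • (X m * P n))) = T := by
    calc (∑ m : Fin (p + q), ∑ n : Fin (p + q),
          (eps p m * eps p n) • (eta p n m • (X m * P n)))
        = ∑ m : Fin (p + q), eps p m • (X m * P m) := by
          refine Finset.sum_congr rfl fun m _ => ?_
          calc (∑ n : Fin (p + q), (eps p m * eps p n) • (eta p n m • (X m * P n)))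
              = ∑ n : Fin (p + q), eps p n • (eta p n m • (eps p m • (X m * P n))) := by
                refine Finset.sum_congr rfl fun n _ => ?_
                rw [smul_smul, smul_smul, smul_smul]
                congr 1
                ring
            _ = eps p m • (X m * P m) := sumEps2R m (fun k => eps p m • (X m * P k))
      _ = T := hT.symm
  have E6 : (∑ m : Fin (p + q), ∑ n : Fin (p + q),
        (eps p m * eps p n) • (eta p m n • (X n * P m))) = T := by
    calc (∑ m : Fin (p + q), ∑ n : Fin (p + q),
          (eps p m * eps p n) • (eta p m n • (X n * P m)))
        = ∑ m : Fin (p + q), eps p m • (X m * P m) := by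
          refine Finset.sum_congr rfl fun m _ => ?_
          calc (∑ n : Fin (p + q), (eps p m * eps p n) • (eta p m n • (X n * P m)))
              = ∑ n : Fin (p + q), eps p n • (eta p m n • (eps p m • (X n * P m))) := by
                refine Finset.sum_congr rfl fun n _ => ?_
                rw [smul_smul, smul_smul, smul_smul]
                congr 1
                ring
            _ = eps p m • (X m * P m) := sumEps2L m (fun k => eps p m • (X k * P m))
      _ = T := hT.symm
  have E10 : (∑ m : Fin (p + q), ∑ n : Fin (p + q),
        (eps p m * eps p n) • ((X n * P m) * M n m)) = -G := by
    rw [Finset.sum_comm]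
    calc (∑ n : Fin (p + q), ∑ m : Fin (p + q),
          (eps p m * eps p n) • ((X n * P m) * M n m))
        = ∑ n : Fin (p + q), ∑ m : Fin (p + q),
            -((eps p n * eps p m) • ((X n * P m) * M m n)) := by
          refine Finset.sum_congr rfl fun a _ => Finset.sum_congr rfl fun b _ => ?_
          rw [hanti a b, mul_neg, smul_neg, mul_comm (eps p b) (eps p a)]
      _ = -G := by rw [hG]; simp [Finset.sum_neg_distrib]
  -- the expansion of J2
  have HJ2 : (∑ m : Fin (p + q), ∑ n : Fin (p + q), (eps p m * eps p n) •
        ((X m * P n - X n * P m + M m n) * (X n * P m - X m * P n + M n m)))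
      = (∑ m : Fin (p + q), ∑ n : Fin (p + q), (eps p m * eps p n) • (M m n * M n m))
        + ((T * T - (T + T) + DA * T - R * Q + (G + G))
          + (T * T - (T + T) + DA * T - R * Q + (G + G))) := by
    calc (∑ m : Fin (p + q), ∑ n : Fin (p + q), (eps p m * eps p n) •
          ((X m * P n - X n * P m + M m n) * (X n * P m - X m * P n + M n m)))
        = ∑ m : Fin (p + q), ∑ n : Fin (p + q), (eps p m * eps p n) •
            (((X m * X n) * (P n * P m) + eta p n n • (X m * P m))
              - ((X m * X m) * (P n * P n) + eta p n m • (X m * P n))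
              - ((X n * X n) * (P m * P m) + eta p m n • (X n * P m))
              + ((X n * X m) * (P m * P n) + eta p m m • (X n * P n))
              + (((X m * P n) * M n m + (X m * P n) * M n m)
                - ((X n * P m) * M n m + (X n * P m) * M n m))
              + M m n * M n m) := by
          exact Finset.sum_congr rfl fun m _ => Finset.sum_congr rfl fun n _ => by
            rw [Fpair m n]
      _ = _ := by
          simp only [smul_add, smul_sub, Finset.sum_add_distrib, Finset.sum_sub_distrib]
          rw [E1, E2, E3, E4, E5, E6, E7, E8, E10, ← hG]
          abel
  -- assemble everything
  have hhalf : (1 / 2 : ℝ) • ((∑ m : Fin (p + q), ∑ n : Fin (p + q), (eps p m * eps p n) •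
        ((X m * P n - X n * P m + M m n) * (X n * P m - X m * P n + M n m))) * Q)
      = (1 / 2 : ℝ) • ((∑ m : Fin (p + q), ∑ n : Fin (p + q),
          (eps p m * eps p n) • (M m n * M n m)) * Q)
        + (T * T - (T + T) + DA * T - R * Q + (G + G)) * Q := by
    rw [HJ2, add_mul, smul_add, add_mul, half2]
  have hzero : (-(S * (T * Q)) + (T * Q + T * Q) + R * (Q * Q) - (G * Q + G * Q))
      + (T * T - (T + T) + DA * T - R * Q + (G + G)) * Q = 0 := by
    rw [SeqT]
    noncomm_ring
  rw [HPie, hhalf, add_add_add_comm, hzero, add_zero]
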